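/- Let ι be a finite index set and for each i ∈ ι let d₁ⁱ and d₂ⁱ be unit vectors in ℝⁿ. Let R and R₀ be orthogonal linear maps of ℝⁿ, let ε > 0, and let ψ ≥ 0 be such that d_Gr(R₀ d₁ⁱ, R d₁ⁱ) ≤ ψ for every i ∈ ι, where d_Gr(x, y) := arccos(|⟨x, y⟩| / (‖x‖·‖y‖)). Then the number of indices i with d_Gr(R d₁ⁱ, d₂ⁱ)² < ε is at most the number of indices i with (max(0, d_Gr(R₀ d₁ⁱ, d₂ⁱ) − ψ))² < ε. (This establishes the upper bound ν̄_r used by the rotational branch-and-bound solver for line-to-line registration: the inlier count of any rotation R in a cube around R₀ whose induced angular perturbation is at most ψ is bounded by the relaxed inlier count at the center R₀.) -/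

import Mathlib

open scoped RealInnerProductSpace

/-- The 1D Grassmann distance between the lines spanned by two nonzero vectors. -/
noncomputable def dGr {E : Type*} [NormedAddCommGroup E] [InnerProductSpace ℝ E]
    (u v : E) : ℝ :=
  Real.arccos (|⟪u, v⟫| / (‖u‖ * ‖v‖))

lemma arccos_le_arccos' {x y : ℝ} (hx : -1 ≤ x) (hxy : x ≤ y) :
    Real.arccos y ≤ Real.arccos x := by
  unfold Real.arccos
  have := Real.monotone_arcsin hxy
  linarith

lemma dGr_nonneg {E : Type*} [NormedAddCommGroup E] [InnerProductSpace ℝ E] (u v : E) :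
    0 ≤ dGr u v := Real.arccos_nonneg _

lemma dGr_unit {E : Type*} [NormedAddCommGroup E] [InnerProductSpace ℝ E]
    {u v : E} (hu : ‖u‖ = 1) (hv : ‖v‖ = 1) :
    dGr u v = Real.arccos |⟪u, v⟫| := by
  simp [dGr, hu, hv]

lemma dGr_triangle {E : Type*} [NormedAddCommGroup E] [InnerProductSpace ℝ E]
    {u v w : E} (hu : ‖u‖ = 1) (hv : ‖v‖ = 1) (hw : ‖w‖ = 1) :
    dGr u w ≤ dGr u v + dGr v w := by
  rw [dGr_unit hu hw, dGr_unit hu hv, dGr_unit hv hw]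
  set a := ⟪u, v⟫ with ha
  set b := ⟪v, w⟫ with hb
  set c := ⟪u, w⟫ with hc
  have habs : ∀ x y : E, ‖x‖ = 1 → ‖y‖ = 1 → |⟪x, y⟫| ≤ 1 := by
    intro x y hx hy
    have := abs_real_inner_le_norm x y
    rw [hx, hy] at this; simpa using this
  have ha1 : |a| ≤ 1 := habs u v hu hv
  have hb1 : |b| ≤ 1 := habs v w hv hw
  have hc1 : |c| ≤ 1 := habs u w hu hw
  by_cases hcase : Real.arccos |a| + Real.arccos |b| ≥ Real.pi / 2
  · have : Real.arccos |c| ≤ Real.pi / 2 := Real.arccos_le_pi_div_two.2 (abs_nonneg _)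
    linarith
  · push_neg at hcase
    -- Need |c| ≥ cos (arccos |a| + arccos |b|)
    have hcos : Real.cos (Real.arccos |a| + Real.arccos |b|)
        = |a| * |b| - Real.sqrt (1 - |a| ^ 2) * Real.sqrt (1 - |b| ^ 2) := by
      rw [Real.cos_add, Real.cos_arccos (by linarith [abs_nonneg a]) ha1,
        Real.cos_arccos (by linarith [abs_nonneg b]) hb1,
        Real.sin_arccos, Real.sin_arccos]
    -- orthogonal components
    have key : |c - a * b| ≤ Real.sqrt (1 - a ^ 2) * Real.sqrt (1 - b ^ 2) := by
      have hinner : ⟪u - a • v, w - b • v⟫ = c - a * b := by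
        have hvv : ⟪v, v⟫ = 1 := by
          rw [real_inner_self_eq_norm_sq, hv]; norm_num
        have hvu : ⟪v, u⟫ = a := real_inner_comm u v
        have hwv : ⟪w, v⟫ = b := real_inner_comm v w
        simp [inner_sub_sub_self, inner_smul_left, inner_smul_right, hvv, hvu, hwv,
          real_inner_smul_left, real_inner_smul_right, inner_sub_left, inner_sub_right, hv, ← ha, ← hb, ← hc]
      have hnu : ‖u - a • v‖ ^ 2 = 1 - a ^ 2 := by
        rw [← real_inner_self_eq_norm_sq]
        have hvv : ⟪v, v⟫ = 1 := by rw [real_inner_self_eq_norm_sq, hv]; norm_num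
        have huu : ⟪u, u⟫ = 1 := by rw [real_inner_self_eq_norm_sq, hu]; norm_num
        have hvu : ⟪v, u⟫ = a := real_inner_comm u v
        simp only [inner_sub_sub_self, real_inner_smul_left, real_inner_smul_right, hvv, huu, hvu]
        ring
      have hnw : ‖w - b • v‖ ^ 2 = 1 - b ^ 2 := by
        rw [← real_inner_self_eq_norm_sq]
        have hvv : ⟪v, v⟫ = 1 := by rw [real_inner_self_eq_norm_sq, hv]; norm_num
        have hww : ⟪w, w⟫ = 1 := by rw [real_inner_self_eq_norm_sq, hw]; norm_num
        have hwv : ⟪w, v⟫ = b := real_inner_comm v w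
        simp only [inner_sub_sub_self, real_inner_smul_left, real_inner_smul_right, hvv, hww, hwv]
        ring
      calc |c - a * b| = |⟪u - a • v, w - b • v⟫| := by rw [hinner]
        _ ≤ ‖u - a • v‖ * ‖w - b • v‖ := abs_real_inner_le_norm _ _
        _ = Real.sqrt (1 - a ^ 2) * Real.sqrt (1 - b ^ 2) := by
            rw [← Real.sqrt_sq (norm_nonneg (u - a • v)), ← Real.sqrt_sq (norm_nonneg (w - b • v)),
              hnu, hnw]
    have hsq : Real.sqrt (1 - a ^ 2) * Real.sqrt (1 - b ^ 2)
        = Real.sqrt (1 - |a| ^ 2) * Real.sqrt (1 - |b| ^ 2) := by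
      rw [sq_abs, sq_abs]
    have hge : Real.cos (Real.arccos |a| + Real.arccos |b|) ≤ |c| := by
      rw [hcos, ← hsq]
      have h1 : |a * b| - |c - a * b| ≤ |c| := by
        have := abs_sub_abs_le_abs_sub (a * b) (c - a * b)
        have h2 : a * b - (c - a * b) = 2 * (a * b) - c := by ring
        have h3 : |a * b| - |c - a * b| ≤ |a * b - (c - a * b)| := abs_sub_abs_le_abs_sub _ _
        -- simpler: |c| ≥ |ab| - |c - ab| since |ab| ≤ |c| + |c - ab|
        have h4 : |a * b| ≤ |c| + |c - a * b| := by
          calc |a * b| = |c - (c - a * b)| := by ring_nf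
            _ ≤ |c| + |c - a * b| := abs_sub _ _
        linarith
      rw [abs_mul] at h1
      linarith [key]
    have := arccos_le_arccos' (Real.neg_one_le_cos _) hge
    calc Real.arccos |c| ≤ Real.arccos (Real.cos (Real.arccos |a| + Real.arccos |b|)) := this
      _ = Real.arccos |a| + Real.arccos |b| := by
          apply Real.arccos_cos
          · exact add_nonneg (Real.arccos_nonneg _) (Real.arccos_nonneg _)
          · linarith [Real.pi_pos]

/-- Upper bound `ν̄_r` of the rotational BnB solver for line-to-line registration: the inlier
count of any rotation `R` whose angular deviation from the center `R₀` is at most `ψ` is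
bounded by the relaxed inlier count at `R₀`. -/
theorem rotation_bnb_upper_bound (n : ℕ) (ι : Type*) [Fintype ι]
    (d₁ d₂ : ι → EuclideanSpace ℝ (Fin n))
    (hd₁ : ∀ i, ‖d₁ i‖ = 1) (hd₂ : ∀ i, ‖d₂ i‖ = 1)
    (R R₀ : EuclideanSpace ℝ (Fin n) ≃ₗᵢ[ℝ] EuclideanSpace ℝ (Fin n))
    (ε : ℝ) (hε : 0 < ε) (ψ : ℝ) (hψ : 0 ≤ ψ)
    (hbound : ∀ i, dGr (R₀ (d₁ i)) (R (d₁ i)) ≤ ψ) :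
    {i | dGr (R (d₁ i)) (d₂ i) ^ 2 < ε}.ncard ≤
      {i | max 0 (dGr (R₀ (d₁ i)) (d₂ i) - ψ) ^ 2 < ε}.ncard := by
  apply Set.ncard_le_ncard _ (Set.toFinite _)
  intro i hi
  simp only [Set.mem_setOf_eq] at hi ⊢
  have h1 : ‖R (d₁ i)‖ = 1 := by rw [R.norm_map]; exact hd₁ i
  have h0 : ‖R₀ (d₁ i)‖ = 1 := by rw [R₀.norm_map]; exact hd₁ i
  have htri : dGr (R₀ (d₁ i)) (d₂ i) ≤ dGr (R₀ (d₁ i)) (R (d₁ i)) + dGr (R (d₁ i)) (d₂ i) :=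
    dGr_triangle h0 h1 (hd₂ i)
  have hle : max 0 (dGr (R₀ (d₁ i)) (d₂ i) - ψ) ≤ dGr (R (d₁ i)) (d₂ i) := by
    apply max_le (dGr_nonneg _ _)
    linarith [hbound i]
  calc max 0 (dGr (R₀ (d₁ i)) (d₂ i) - ψ) ^ 2 ≤ dGr (R (d₁ i)) (d₂ i) ^ 2 :=
        pow_le_pow_left₀ (le_max_left _ _) hle 2
    _ < ε := hi
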